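/- Let α : E → (Fin N → ℝ) be differentiable, and suppose at a point x the sorted values of α(x) have at least two coincident consecutive gaps (i.e. there exist two distinct indices k ≠ k' in the sorted order with α_{k+1}(x) = α_k(x) and α_{k'+1}(x) = α_{k'}(x)). Define f(y) = ∏_{i} (α_{σ(y)(i+1)}(y) − α_{σ(y)(i)}(y)) where σ(y) is a sorting permutation of α(y). Then f has derivative zero at x (the limit of (f(y) − f(x))/‖y − x‖ as y → x is 0). -/

import Mathlib

open Filter Asymptotics Topology

/-- If `p < q` and the monotone `s` satisfies `s q - s p ≤ c`, then the consecutive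
gap at position `p` is at most `c`. -/
lemma aux_gap {N : ℕ} (s : Fin (N + 1) → ℝ) (hs : Monotone s) {p q : Fin (N + 1)}
    (hpq : p < q) {c : ℝ} (hc : s q - s p ≤ c) :
    ∃ i : Fin N, (i : ℕ) = (p : ℕ) ∧ s i.succ - s i.castSucc ≤ c := by
  have hq : (q : ℕ) ≤ N := Nat.lt_succ_iff.mp q.isLt
  have hp : (p : ℕ) < N := lt_of_lt_of_le (Fin.lt_def.mp hpq) hq
  refine ⟨⟨(p : ℕ), hp⟩, rfl, ?_⟩
  have h1 : Fin.castSucc (⟨(p : ℕ), hp⟩ : Fin N) = p := by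
    ext; simp
  have h2 : Fin.succ (⟨(p : ℕ), hp⟩ : Fin N) ≤ q := by
    rw [Fin.le_def]
    simpa using Fin.lt_def.mp hpq
  have := hs h2
  rw [h1]
  linarith

/-- Ordered version: two ordered pairs with small spans give two distinct small gaps. -/
lemma aux_two' {N : ℕ} (s : Fin (N + 1) → ℝ) (hs : Monotone s)
    {p1 p2 p3 p4 : Fin (N + 1)} (h12 : p1 < p2) (h34 : p3 < p4)
    (hne : ¬(p1 = p3 ∧ p2 = p4)) {ε : ℝ} (hε : 0 ≤ ε)
    (e12 : s p2 - s p1 ≤ 2 * ε) (e34 : s p4 - s p3 ≤ 2 * ε) :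
    ∃ i1 i2 : Fin N, i1 ≠ i2 ∧ s i1.succ - s i1.castSucc ≤ 4 * ε ∧
      s i2.succ - s i2.castSucc ≤ 4 * ε := by
  obtain ⟨i1, hv1, hg1⟩ := aux_gap s hs h12 e12
  by_cases hpp : (p1 : ℕ) = (p3 : ℕ)
  · -- p1 = p3, so p2 ≠ p4
    have hp13 : p1 = p3 := Fin.ext hpp
    have hp24 : p2 ≠ p4 := fun h => hne ⟨hp13, h⟩
    have hab : min p2 p4 < max p2 p4 := min_lt_max.mpr hp24
    have h1a : p1 < min p2 p4 := lt_min h12 (hp13 ▸ h34)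
    have hsb : s (max p2 p4) - s (min p2 p4) ≤ 4 * ε := by
      have hsp1 : s p1 ≤ s (min p2 p4) := hs h1a.le
      rcases max_choice p2 p4 with h | h <;> rw [h]
      · linarith
      · have : s p3 = s p1 := by rw [hp13]
        linarith
    obtain ⟨i3, hv3, hg3⟩ := aux_gap s hs hab hsb
    refine ⟨i1, i3, ?_, hg1.trans (by linarith), hg3⟩
    have : (p1 : ℕ) < ((min p2 p4 : Fin (N + 1)) : ℕ) := Fin.lt_def.mp h1a
    exact Fin.ne_of_val_ne (by omega)
  · obtain ⟨i2, hv2, hg2⟩ := aux_gap s hs h34 e34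
    exact ⟨i1, i2, Fin.ne_of_val_ne (by omega), hg1.trans (by linarith),
      hg2.trans (by linarith)⟩

/-- Unordered version. -/
lemma aux_two {N : ℕ} (s : Fin (N + 1) → ℝ) (hs : Monotone s)
    {p1 p2 p3 p4 : Fin (N + 1)} (h12 : p1 ≠ p2) (h34 : p3 ≠ p4)
    (hne : ¬((p1 = p3 ∧ p2 = p4) ∨ (p1 = p4 ∧ p2 = p3))) {ε : ℝ} (hε : 0 ≤ ε)
    (e12 : |s p1 - s p2| ≤ 2 * ε) (e34 : |s p3 - s p4| ≤ 2 * ε) :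
    ∃ i1 i2 : Fin N, i1 ≠ i2 ∧ s i1.succ - s i1.castSucc ≤ 4 * ε ∧
      s i2.succ - s i2.castSucc ≤ 4 * ε := by
  have key : ∀ a b : Fin (N + 1), |s a - s b| ≤ 2 * ε → s b - s a ≤ 2 * ε := by
    intro a b h
    have := neg_abs_le (s a - s b)
    linarith
  have key' : ∀ a b : Fin (N + 1), |s a - s b| ≤ 2 * ε → s a - s b ≤ 2 * ε := by
    intro a b h
    have := le_abs_self (s a - s b)
    linarith
  rcases h12.lt_or_gt with h12' | h12' <;> rcases h34.lt_or_gt with h34' | h34'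
  · exact aux_two' s hs h12' h34' (by tauto) hε (key _ _ e12) (key _ _ e34)
  · exact aux_two' s hs h12' h34' (by tauto) hε (key _ _ e12) (key' _ _ e34)
  · exact aux_two' s hs h12' h34' (by tauto) hε (key' _ _ e12) (key _ _ e34)
  · exact aux_two' s hs h12' h34' (by tauto) hε (key' _ _ e12) (key' _ _ e34)

/-- Key quantitative bound: if two distinct sorted gaps of `w` vanish, then the gap
product of `v` is bounded by a constant times `‖v - w‖ ^ 2`. -/
lemma key_bound {N : ℕ} (v w : Fin (N + 1) → ℝ) (σv σw : Equiv.Perm (Fin (N + 1)))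
    (hv : Monotone (v ∘ σv))
    (k k' : Fin N) (hkk' : k ≠ k')
    (hk : w (σw k.succ) = w (σw k.castSucc))
    (hk' : w (σw k'.succ) = w (σw k'.castSucc))
    (B : ℝ) (hB : 1 ≤ B) (hBg : ∀ j, |v j| ≤ B / 2) :
    ∏ i : Fin N, (v (σv i.succ) - v (σv i.castSucc)) ≤ 16 * B ^ N * ‖v - w‖ ^ 2 := by
  set s : Fin (N + 1) → ℝ := v ∘ σv with hsdef
  set ε : ℝ := ‖v - w‖ with hεdef
  have hε : 0 ≤ ε := norm_nonneg _
  have hpt : ∀ j, |v j - w j| ≤ ε := by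
    intro j
    have := norm_le_pi_norm (v - w) j
    simpa [Real.norm_eq_abs] using this
  -- the four indices and their positions in the sorted order of v
  set j1 := σw k.castSucc with hj1
  set j2 := σw k.succ with hj2
  set j3 := σw k'.castSucc with hj3
  set j4 := σw k'.succ with hj4
  set p1 := σv.symm j1 with hp1
  set p2 := σv.symm j2 with hp2
  set p3 := σv.symm j3 with hp3
  set p4 := σv.symm j4 with hp4
  have hsp : ∀ j, s (σv.symm j) = v j := by
    intro j; simp [hsdef]
  have habs : ∀ a b : Fin (N + 1), w a = w b → |v a - v b| ≤ 2 * ε := by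
    intro a b hw
    have h1 := hpt a
    have h2 := hpt b
    have : v a - v b = (v a - w a) - (v b - w b) := by rw [hw]; ring
    rw [this]
    calc |(v a - w a) - (v b - w b)| ≤ |v a - w a| + |v b - w b| := abs_sub _ _
      _ ≤ 2 * ε := by linarith
  have hcs : ∀ m : Fin N, m.castSucc ≠ m.succ := fun m => (Fin.castSucc_lt_succ : m.castSucc < m.succ).ne
  have hne12 : p1 ≠ p2 := fun h => hcs k (σw.injective (σv.symm.injective h))
  have hne34 : p3 ≠ p4 := fun h => hcs k' (σw.injective (σv.symm.injective h))
  have hkval : (k : ℕ) ≠ (k' : ℕ) := fun h => hkk' (Fin.ext h)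
  have hne : ¬((p1 = p3 ∧ p2 = p4) ∨ (p1 = p4 ∧ p2 = p3)) := by
    rintro (⟨h1, _⟩ | ⟨h1, h2⟩)
    · have : k.castSucc = k'.castSucc := σw.injective (σv.symm.injective h1)
      exact hkk' (Fin.castSucc_injective _ this)
    · have e1 : k.castSucc = k'.succ := σw.injective (σv.symm.injective h1)
      have e2 : k.succ = k'.castSucc := σw.injective (σv.symm.injective h2)
      have e1' : (k : ℕ) = (k' : ℕ) + 1 := by
        have := congrArg Fin.val e1; simpa using this
      have e2' : (k : ℕ) + 1 = (k' : ℕ) := by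
        have := congrArg Fin.val e2; simpa using this
      omega
  have e12 : |s p1 - s p2| ≤ 2 * ε := by
    rw [hsp, hsp]; exact habs _ _ hk.symm
  have e34 : |s p3 - s p4| ≤ 2 * ε := by
    rw [hsp, hsp]; exact habs _ _ hk'.symm
  obtain ⟨i1, i2, hii, hg1, hg2⟩ := aux_two s hv hne12 hne34 hne hε e12 e34
  -- now bound the product
  set g : Fin N → ℝ := fun i => v (σv i.succ) - v (σv i.castSucc) with hgdef
  have hgnn : ∀ i : Fin N, 0 ≤ g i := by
    intro i
    have := hv (Fin.castSucc_lt_succ : i.castSucc < i.succ).le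
    simpa [hgdef, hsdef] using this
  have hgB : ∀ i : Fin N, g i ≤ B := by
    intro i
    have h1 := hBg (σv i.succ)
    have h2 := hBg (σv i.castSucc)
    have := abs_le.mp h1
    have := abs_le.mp h2
    simp only [hgdef]
    cases abs_le.mp h1; cases abs_le.mp h2; linarith
  have hgε : g i1 ≤ 4 * ε ∧ g i2 ≤ 4 * ε := ⟨hg1, hg2⟩
  -- product decomposition
  have hmem2 : i2 ∈ Finset.univ.erase i1 := Finset.mem_erase.mpr ⟨hii.symm, Finset.mem_univ _⟩
  have hsplit1 : ∏ i : Fin N, g i = g i1 * ∏ i ∈ Finset.univ.erase i1, g i :=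
    (Finset.mul_prod_erase _ _ (Finset.mem_univ i1)).symm
  have hsplit2 : ∏ i ∈ Finset.univ.erase i1, g i
      = g i2 * ∏ i ∈ (Finset.univ.erase i1).erase i2, g i :=
    (Finset.mul_prod_erase _ _ hmem2).symm
  set S := (Finset.univ.erase i1).erase i2 with hS
  have hProdnn : 0 ≤ ∏ i ∈ S, g i := Finset.prod_nonneg fun i _ => hgnn i
  have hProdB : ∏ i ∈ S, g i ≤ B ^ N := by
    calc ∏ i ∈ S, g i ≤ ∏ _i ∈ S, B :=
          Finset.prod_le_prod (fun i _ => hgnn i) (fun i _ => hgB i)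
      _ = B ^ S.card := Finset.prod_const B
      _ ≤ B ^ N := by
          apply pow_le_pow_right₀ hB
          have := Finset.card_le_univ S
          simpa using this
  calc ∏ i : Fin N, g i = g i1 * (g i2 * ∏ i ∈ S, g i) := by rw [hsplit1, hsplit2]
    _ ≤ (4 * ε) * (g i2 * ∏ i ∈ S, g i) := by
        apply mul_le_mul_of_nonneg_right hg1
        exact mul_nonneg (hgnn i2) hProdnn
    _ ≤ (4 * ε) * ((4 * ε) * B ^ N) := by
        apply mul_le_mul_of_nonneg_left _ (by linarith)
        exact mul_le_mul hg2 hProdB hProdnn (by linarith)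
    _ = 16 * B ^ N * ε ^ 2 := by ring

/-- If at a point `x` two distinct consecutive sorted gaps of `α(x)` vanish
simultaneously, then the product of consecutive sorted gaps has derivative zero
at `x`. -/
theorem gap_product_deriv_zero_at_double_collision
    {E : Type*} [NormedAddCommGroup E] [NormedSpace ℝ E] {N : ℕ}
    (α : E → Fin (N + 1) → ℝ) (hα : Differentiable ℝ α)
    (σ : E → Equiv.Perm (Fin (N + 1)))
    (hσ : ∀ y, Monotone (α y ∘ σ y))
    (f : E → ℝ)
    (hf : ∀ y, f y = ∏ i : Fin N, (α y (σ y i.succ) - α y (σ y i.castSucc)))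
    (x : E) (k k' : Fin N) (hkk' : k ≠ k')
    (hk : α x (σ x k.succ) - α x (σ x k.castSucc) = 0)
    (hk' : α x (σ x k'.succ) - α x (σ x k'.castSucc) = 0) :
    HasFDerivAt f (0 : E →L[ℝ] ℝ) x := by
  have hfx : f x = 0 := by
    rw [hf x]
    exact Finset.prod_eq_zero (Finset.mem_univ k) hk
  set B : ℝ := max 1 (2 * (‖α x‖ + 1)) with hBdef
  have hB1 : (1 : ℝ) ≤ B := le_max_left _ _
  have hB2 : 2 * (‖α x‖ + 1) ≤ B := le_max_right _ _
  have hcont : Tendsto (fun y => ‖α y - α x‖) (𝓝 x) (𝓝 0) := by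
    have h := (hα.continuous.tendsto x)
    rwa [tendsto_iff_norm_sub_tendsto_zero] at h
  have hev1 : ∀ᶠ y in 𝓝 x, ‖α y - α x‖ ≤ 1 :=
    (hcont.eventually (gt_mem_nhds one_pos)).mono fun y h => h.le
  have hO : f =O[𝓝 x] fun y => ‖α y - α x‖ ^ 2 := by
    rw [Asymptotics.isBigO_iff]
    refine ⟨16 * B ^ N, hev1.mono fun y hy => ?_⟩
    have hBg : ∀ j, |α y j| ≤ B / 2 := by
      intro j
      have h1 : ‖α y j‖ ≤ ‖α y‖ := norm_le_pi_norm (α y) j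
      have h2 : ‖α y‖ ≤ ‖α x‖ + ‖α y - α x‖ := by
        have := norm_sub_norm_le (α y) (α x)
        linarith [abs_le.mp (le_refl |‖α y‖ - ‖α x‖|)]
      rw [Real.norm_eq_abs] at h1
      linarith
    have hknum : α x (σ x k.succ) = α x (σ x k.castSucc) := by linarith [hk]
    have hknum' : α x (σ x k'.succ) = α x (σ x k'.castSucc) := by linarith [hk']
    have hkey := key_bound (α y) (α x) (σ y) (σ x) (hσ y) k k' hkk' hknum hknum' B hB1 hBg
    have hfnn : 0 ≤ f y := by
      rw [hf y]
      refine Finset.prod_nonneg fun i _ => ?_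
      have := (hσ y) (Fin.castSucc_lt_succ : i.castSucc < i.succ).le
      simpa using this
    rw [Real.norm_eq_abs, abs_of_nonneg hfnn, hf y]
    have hnn2 : (0 : ℝ) ≤ ‖α y - α x‖ ^ 2 := by positivity
    rw [Real.norm_eq_abs, abs_of_nonneg hnn2]
    exact hkey
  have h1 : (fun y => α y - α x) =O[𝓝 x] fun y => y - x :=
    (hα x).hasFDerivAt.isBigO_sub
  have h2 : (fun y => ‖α y - α x‖) =O[𝓝 x] fun y => ‖y - x‖ := h1.norm_norm
  have h3 : (fun y => ‖α y - α x‖ ^ 2) =O[𝓝 x] fun y => ‖y - x‖ ^ 2 := h2.pow 2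
  have h4 : (fun y : E => ‖y - x‖ ^ 2) =o[𝓝 x] fun y => y - x := by
    have htend : Tendsto (fun y : E => ‖y - x‖) (𝓝 x) (𝓝 0) := by
      have : Tendsto (fun y : E => y - x) (𝓝 x) (𝓝 (x - x)) :=
        (continuous_id.sub continuous_const).tendsto x
      rw [sub_self] at this
      simpa using this.norm
    have h0 : (fun y : E => ‖y - x‖) =o[𝓝 x] fun _ => (1 : ℝ) :=
      (Asymptotics.isLittleO_one_iff ℝ).mpr htend
    have h5 := h0.mul_isBigO (Asymptotics.isBigO_refl (fun y : E => ‖y - x‖) (𝓝 x))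
    have h6 : (fun y : E => ‖y - x‖ ^ 2) =o[𝓝 x] fun y => ‖y - x‖ := by
      simpa [pow_two] using h5
    exact h6.trans_isBigO (Asymptotics.isBigO_norm_left.mpr
      (Asymptotics.isBigO_refl (fun y : E => y - x) (𝓝 x)))
  have hfinal : f =o[𝓝 x] fun y => y - x := (hO.trans h3).trans_isLittleO h4
  rw [HasFDerivAt, hasFDerivAtFilter_iff_isLittleO]
  simpa [hfx, Function.comp_def] using hfinal
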